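/- For all integers $n \geq 42$, $f_1(n,2) := -\frac{n}{2} + \frac{1}{2}\sum_{k=1}^{n-1}\left(\frac{1}{\sin(k\pi/n)} - \sin\frac{k\pi}{n}\right) > 0$. -/

import Mathlib

open Real Finset

theorem f1_n_two_pos (n : ℕ) (hn : 42 ≤ n) :
    0 < -(n : ℝ) / 2 + (1 / 2 : ℝ) * ∑ k ∈ Finset.Icc 1 (n - 1),
        (1 / Real.sin (k * π / n) - Real.sin (k * π / n)) := by
  have hπ : (0:ℝ) < π := Real.pi_pos
  have hn0 : (0:ℝ) < n := by
    have : 0 < n := by omega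
    exact_mod_cast this
  -- sin positivity
  have hsinpos : ∀ k : ℕ, 1 ≤ k → k ≤ n - 1 → 0 < Real.sin (k * π / n) := by
    intro k hk1 hk2
    apply Real.sin_pos_of_pos_of_lt_pi
    · have hk0 : (0:ℝ) < k := by exact_mod_cast hk1
      positivity
    · rw [div_lt_iff₀ hn0]
      have hkn : (k:ℝ) < n := by exact_mod_cast (by omega : k < n)
      nlinarith
  -- sin symmetry
  have hsym : ∀ k : ℕ, 1 ≤ k → k ≤ n - 1 →
      Real.sin (k * π / n) = Real.sin ((n - k : ℕ) * π / n) := by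
    intro k hk1 hk2
    have hc : ((n - k : ℕ) : ℝ) = (n:ℝ) - k := by
      have : k ≤ n := by omega
      push_cast [this]; ring
    rw [hc, ← Real.sin_pi_sub]
    congr 1
    field_simp
  -- lower bound 1
  have hub : ∀ k : ℕ, 1 ≤ k → k ≤ n - 1 → (n:ℝ)/(π * k) ≤ 1 / Real.sin (k * π / n) := by
    intro k hk1 hk2
    have hs := hsinpos k hk1 hk2
    have hk0 : (0:ℝ) < k := by exact_mod_cast hk1
    have hle : Real.sin (k * π / n) ≤ k * π / n := Real.sin_le (by positivity)
    have h2 : (n:ℝ)/(π * k) = 1/(k * π / n) := by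
      rw [one_div_div]
      ring
    rw [h2]
    exact one_div_le_one_div_of_le hs hle
  -- lower bound 2
  have hub2 : ∀ k : ℕ, 1 ≤ k → k ≤ n - 1 →
      (n:ℝ)/(π * (n - k : ℕ)) ≤ 1 / Real.sin (k * π / n) := by
    intro k hk1 hk2
    rw [hsym k hk1 hk2]
    exact hub (n - k) (by omega) (by omega)
  set m := n / 2 with hm
  have hm20 : 20 ≤ m := by omega
  have hm20' : 20 ≤ n - 1 - m := by omega
  -- harmonic numeric bound
  have h20 : (3.15:ℝ) < ∑ k ∈ Finset.Ioc (0:ℕ) 20, 1/(k:ℝ) := by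
    have e : Finset.range 21 = insert 0 (Finset.Ioc (0:ℕ) 20) := by decide
    have h0 : (0:ℕ) ∉ Finset.Ioc (0:ℕ) 20 := by decide
    have hr : ∑ k ∈ Finset.range 21, 1/(k:ℝ) = ∑ k ∈ Finset.Ioc (0:ℕ) 20, 1/(k:ℝ) := by
      rw [e, Finset.sum_insert h0]
      norm_num
    rw [← hr]
    norm_num [Finset.sum_range_succ]
  have hmono : ∀ M : ℕ, 20 ≤ M →
      ∑ k ∈ Finset.Ioc (0:ℕ) 20, 1/(k:ℝ) ≤ ∑ k ∈ Finset.Ioc (0:ℕ) M, 1/(k:ℝ) := by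
    intro M hM
    apply Finset.sum_le_sum_of_subset_of_nonneg (Finset.Ioc_subset_Ioc_right hM)
    intros
    positivity
  -- reindex lemma
  have hreindex : ∀ f : ℕ → ℝ,
      ∑ k ∈ Finset.Ioc m (n-1), f (n - k) = ∑ k ∈ Finset.Ioc 0 (n-1-m), f k := by
    intro f
    refine Finset.sum_nbij' (fun k => n - k) (fun k => n - k) ?_ ?_ ?_ ?_ ?_
    · intro a ha; simp only [Finset.mem_Ioc] at *; omega
    · intro a ha; simp only [Finset.mem_Ioc] at *; omega
    · intro a ha; simp only [Finset.mem_Ioc] at *; omega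
    · intro a ha; simp only [Finset.mem_Ioc] at *; omega
    · intro a ha; rfl
  -- split the sum over Icc 1 (n-1)
  have hIcc : Finset.Icc 1 (n-1) = Finset.Ioc 0 (n-1) := by
    exact Finset.Icc_add_one_left_eq_Ioc 0 (n-1)
  have hsplit : ∀ f : ℕ → ℝ, ∑ k ∈ Finset.Ioc 0 (n-1), f k
      = ∑ k ∈ Finset.Ioc 0 m, f k + ∑ k ∈ Finset.Ioc m (n-1), f k := by
    intro f
    exact (Finset.sum_Ioc_consecutive f (by omega) (by omega)).symm
  -- main lower bound on the 1/sin sum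
  have hA : (n/π) * (∑ k ∈ Finset.Ioc 0 m, 1/(k:ℝ)) ≤
      ∑ k ∈ Finset.Ioc 0 m, 1 / Real.sin (k * π / n) := by
    rw [Finset.mul_sum]
    apply Finset.sum_le_sum
    intro k hk
    simp only [Finset.mem_Ioc] at hk
    have := hub k (by omega) (by omega)
    calc (n/π) * (1/(k:ℝ)) = (n:ℝ)/(π * k) := by ring
      _ ≤ _ := this
  have hB : (n/π) * (∑ k ∈ Finset.Ioc 0 (n-1-m), 1/(k:ℝ)) ≤
      ∑ k ∈ Finset.Ioc m (n-1), 1 / Real.sin (k * π / n) := by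
    rw [Finset.mul_sum, ← hreindex (fun j => (n/π) * (1/(j:ℝ)))]
    apply Finset.sum_le_sum
    intro k hk
    simp only [Finset.mem_Ioc] at hk
    have := hub2 k (by omega) (by omega)
    calc (n/π) * (1/((n - k : ℕ):ℝ)) = (n:ℝ)/(π * (n - k : ℕ)) := by ring
      _ ≤ _ := this
  have hT : (n/π) * (∑ k ∈ Finset.Ioc 0 m, 1/(k:ℝ) + ∑ k ∈ Finset.Ioc 0 (n-1-m), 1/(k:ℝ))
      ≤ ∑ k ∈ Finset.Icc 1 (n-1), 1 / Real.sin (k * π / n) := by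
    rw [hIcc, hsplit (fun k => 1 / Real.sin (k * π / n)), mul_add]
    exact add_le_add hA hB
  -- the sin sum is at most n - 1
  have hsinsum : ∑ k ∈ Finset.Icc 1 (n-1), Real.sin (k * π / n) ≤ (n:ℝ) - 1 := by
    calc ∑ k ∈ Finset.Icc 1 (n-1), Real.sin (k * π / n)
        ≤ ∑ k ∈ Finset.Icc 1 (n-1), (1:ℝ) :=
          Finset.sum_le_sum fun k _ => Real.sin_le_one _
      _ = ((Finset.Icc 1 (n-1)).card : ℝ) := by simp
      _ = (n:ℝ) - 1 := by
          rw [Nat.card_Icc]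
          have : n - 1 + 1 - 1 = n - 1 := by omega
          rw [this]
          have : ((n - 1 : ℕ) : ℝ) = (n:ℝ) - 1 := by
            push_cast [show 1 ≤ n by omega]; ring
          rw [this]
  -- combine
  have hsub : ∑ k ∈ Finset.Icc 1 (n-1), (1 / Real.sin (k * π / n) - Real.sin (k * π / n))
      = (∑ k ∈ Finset.Icc 1 (n-1), 1 / Real.sin (k * π / n))
        - ∑ k ∈ Finset.Icc 1 (n-1), Real.sin (k * π / n) := by
    rw [Finset.sum_sub_distrib]
  have hA' := hmono m hm20
  have hB' := hmono (n-1-m) hm20'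
  have hpi315 : π < 3.15 := Real.pi_lt_d2
  have hlarge : 2 * π <
      ∑ k ∈ Finset.Ioc 0 m, 1/(k:ℝ) + ∑ k ∈ Finset.Ioc 0 (n-1-m), 1/(k:ℝ) := by
    linarith
  have hTbig : 2 * (n:ℝ) < ∑ k ∈ Finset.Icc 1 (n-1), 1 / Real.sin (k * π / n) := by
    have h1 : (n/π) * (2 * π) < (n/π) *
        (∑ k ∈ Finset.Ioc 0 m, 1/(k:ℝ) + ∑ k ∈ Finset.Ioc 0 (n-1-m), 1/(k:ℝ)) := by
      apply mul_lt_mul_of_pos_left hlarge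
      positivity
    have h2 : (n/π) * (2 * π) = 2 * (n:ℝ) := by
      field_simp
    linarith
  rw [hsub] at *
  linarith
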